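/- For the 1D function u above, the second derivative p*(x) = u''(x) equals -48(2x+1)(6x+5) on (-1,-1/2), 0 on [-1/2,1/2], and -48(2x-1)(6x-5) on (1/2,1); p* is continuous on (-1,1), but its (distributional) derivative has jump discontinuities at x = ±1/2, so p* does not belong to H²(-1,1) (equivalently (p*)'' ∉ L²(-1,1)). -/

import Mathlib

open Set

/-- The explicit solution of the 1D biharmonic obstacle problem on (-1,1)
with f ≡ -1152 and obstacle φ ≡ -1. -/
noncomputable def uExact (x : ℝ) : ℝ :=
  if x < -(1/2) then -8*(x+1)^2*(6*x^2+4*x+1)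
  else if x ≤ 1/2 then -1
  else -8*(x-1)^2*(6*x^2-4*x+1)

/-- The exact flux `p* = u''`, given by the explicit piecewise formula. -/
noncomputable def pStar (x : ℝ) : ℝ :=
  if x < -(1/2) then -48*(2*x+1)*(6*x+5)
  else if x ≤ 1/2 then 0
  else -48*(2*x-1)*(6*x-5)

/-- The first derivative of `uExact`. -/
noncomputable def vAux (x : ℝ) : ℝ :=
  if x < -(1/2) then -192*x^3 - 384*x^2 - 240*x - 48
  else if x ≤ 1/2 then 0
  else -192*x^3 + 384*x^2 - 240*x + 48

lemma hasDerivAt_poly4 (a b c d e x : ℝ) :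
    HasDerivAt (fun y : ℝ => a*y^4 + b*y^3 + c*y^2 + d*y + e)
      (4*a*x^3 + 3*b*x^2 + 2*c*x + d) x := by
  have h4 : HasDerivAt (fun y:ℝ => y^4) (4*x^3) x := by simpa using hasDerivAt_pow 4 x
  have h3 : HasDerivAt (fun y:ℝ => y^3) (3*x^2) x := by simpa using hasDerivAt_pow 3 x
  have h2 : HasDerivAt (fun y:ℝ => y^2) (2*x) x := by simpa using hasDerivAt_pow 2 x
  have h1 : HasDerivAt (fun y:ℝ => y) 1 x := hasDerivAt_id x
  have h := ((((h4.const_mul a).add (h3.const_mul b)).add (h2.const_mul c)).add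
      (h1.const_mul d)).add_const e
  exact h.congr_deriv (by ring)

lemma mem_nhds_union_left : Iic (-(1/2):ℝ) ∪ Icc (-(1/2)) (1/2) ∈ nhds (-(1/2):ℝ) := by
  apply Filter.mem_of_superset (Iio_mem_nhds (show (-(1/2):ℝ) < 1/2 by norm_num))
  intro y hy
  rcases le_or_gt y (-(1/2)) with h | h
  · exact Or.inl h
  · exact Or.inr ⟨h.le, le_of_lt hy⟩

lemma mem_nhds_union_right : Icc (-(1/2):ℝ) (1/2) ∪ Ici (1/2:ℝ) ∈ nhds (1/2:ℝ) := by
  apply Filter.mem_of_superset (Ioi_mem_nhds (show (-(1/2):ℝ) < 1/2 by norm_num))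
  intro y hy
  rcases le_or_gt y (1/2) with h | h
  · exact Or.inl ⟨le_of_lt hy, h⟩
  · exact Or.inr h.le

lemma uExact_hasDerivAt (x : ℝ) : HasDerivAt uExact (vAux x) x := by
  rcases lt_trichotomy x (-(1/2)) with hx | hx | hx
  · have heq : uExact =ᶠ[nhds x] fun y => (-48)*y^4 + (-128)*y^3 + (-120)*y^2 + (-48)*y + (-8) := by
      filter_upwards [Iio_mem_nhds hx] with y hy
      simp only [Set.mem_Iio, Set.mem_Iic, Set.mem_Ici, Set.mem_Ioi, Set.mem_Ioo, Set.mem_Icc] at hy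
      simp only [uExact, if_pos hy]; ring
    have h := (hasDerivAt_poly4 (-48) (-128) (-120) (-48) (-8) x).congr_of_eventuallyEq heq
    have hv : vAux x = 4*(-48)*x^3 + 3*(-128)*x^2 + 2*(-120)*x + (-48) := by
      simp only [vAux, if_pos hx]; ring
    rw [hv]; exact h
  · subst hx
    have heqL : ∀ y ∈ Iic (-(1/2):ℝ),
        uExact y = (-48)*y^4 + (-128)*y^3 + (-120)*y^2 + (-48)*y + (-8) := by
      intro y hy
      simp only [Set.mem_Iic, Set.mem_Ici] at hy
      rcases lt_or_eq_of_le (hy : y ≤ -(1/2)) with h | h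
      · simp only [uExact, if_pos h]; ring
      · subst h; norm_num [uExact]
    have hQ1 : HasDerivWithinAt (fun y:ℝ => (-48)*y^4 + (-128)*y^3 + (-120)*y^2 + (-48)*y + (-8))
        0 (Iic (-(1/2))) (-(1/2)) := by
      have h := (hasDerivAt_poly4 (-48) (-128) (-120) (-48) (-8) (-(1/2))).hasDerivWithinAt
        (s := Iic (-(1/2)))
      exact h.congr_deriv (by norm_num)
    have hL : HasDerivWithinAt uExact 0 (Iic (-(1/2))) (-(1/2)) :=
      hQ1.congr heqL (heqL _ Set.self_mem_Iic)
    have hC : HasDerivWithinAt uExact 0 (Icc (-(1/2)) (1/2)) (-(1/2)) := by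
      refine ((hasDerivAt_const (-(1/2):ℝ) (-1:ℝ)).hasDerivWithinAt).congr (fun y hy => ?_) ?_
      · simp only [uExact, if_neg (not_lt.mpr hy.1), if_pos hy.2]
      · norm_num [uExact]
    have hd := (hL.union hC).hasDerivAt mem_nhds_union_left
    rw [show vAux (-(1/2)) = 0 by norm_num [vAux]]
    exact hd
  · rcases lt_trichotomy x (1/2) with hx2 | hx2 | hx2
    · have heq : uExact =ᶠ[nhds x] fun _ => (-1:ℝ) := by
        filter_upwards [Ioo_mem_nhds hx hx2] with y hy
        simp only [Set.mem_Iio, Set.mem_Iic, Set.mem_Ici, Set.mem_Ioi, Set.mem_Ioo, Set.mem_Icc] at hy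
        simp only [uExact, if_neg (not_lt.mpr hy.1.le), if_pos hy.2.le]
      have h := (hasDerivAt_const x (-1:ℝ)).congr_of_eventuallyEq heq
      rw [show vAux x = 0 by simp only [vAux, if_neg (not_lt.mpr hx.le), if_pos hx2.le]]
      exact h
    · subst hx2
      have hC : HasDerivWithinAt uExact 0 (Icc (-(1/2)) (1/2)) (1/2) := by
        refine ((hasDerivAt_const (1/2:ℝ) (-1:ℝ)).hasDerivWithinAt).congr (fun y hy => ?_) ?_
        · simp only [uExact, if_neg (not_lt.mpr hy.1), if_pos hy.2]
        · norm_num [uExact]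
      have heqR : ∀ y ∈ Ici (1/2:ℝ),
          uExact y = (-48)*y^4 + 128*y^3 + (-120)*y^2 + 48*y + (-8) := by
        intro y hy
        rcases lt_or_eq_of_le (show (1/2:ℝ) ≤ y from hy) with h | h
        · simp only [uExact, if_neg (not_lt.mpr (le_of_lt (by linarith : (-(1/2):ℝ) < y))),
            if_neg (not_le.mpr h)]
          ring
        · subst h; norm_num [uExact]
      have hQ3 : HasDerivWithinAt (fun y:ℝ => (-48)*y^4 + 128*y^3 + (-120)*y^2 + 48*y + (-8))
          0 (Ici (1/2)) (1/2) := by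
        have h := (hasDerivAt_poly4 (-48) 128 (-120) 48 (-8) (1/2)).hasDerivWithinAt
          (s := Ici (1/2))
        exact h.congr_deriv (by norm_num)
      have hR : HasDerivWithinAt uExact 0 (Ici (1/2)) (1/2) :=
        hQ3.congr heqR (heqR _ Set.self_mem_Ici)
      have hd := (hC.union hR).hasDerivAt mem_nhds_union_right
      rw [show vAux (1/2) = 0 by norm_num [vAux]]
      exact hd
    · have heq : uExact =ᶠ[nhds x] fun y => (-48)*y^4 + 128*y^3 + (-120)*y^2 + 48*y + (-8) := by
        filter_upwards [Ioi_mem_nhds hx2] with y hy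
        simp only [Set.mem_Iio, Set.mem_Iic, Set.mem_Ici, Set.mem_Ioi, Set.mem_Ioo, Set.mem_Icc] at hy
        simp only [uExact, if_neg (not_lt.mpr (le_of_lt (by linarith : (-(1/2):ℝ) < y))),
          if_neg (not_le.mpr hy)]
        ring
      have h := (hasDerivAt_poly4 (-48) 128 (-120) 48 (-8) x).congr_of_eventuallyEq heq
      have hv : vAux x = 4*(-48)*x^3 + 3*128*x^2 + 2*(-120)*x + 48 := by
        simp only [vAux, if_neg (not_lt.mpr (by linarith : (-(1/2):ℝ) ≤ x)),
          if_neg (not_le.mpr hx2)]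
        ring
      rw [hv]; exact h

lemma vAux_hasDerivAt (x : ℝ) : HasDerivAt vAux (pStar x) x := by
  rcases lt_trichotomy x (-(1/2)) with hx | hx | hx
  · have heq : vAux =ᶠ[nhds x] fun y => 0*y^4 + (-192)*y^3 + (-384)*y^2 + (-240)*y + (-48) := by
      filter_upwards [Iio_mem_nhds hx] with y hy
      simp only [Set.mem_Iio, Set.mem_Iic, Set.mem_Ici, Set.mem_Ioi, Set.mem_Ioo, Set.mem_Icc] at hy
      simp only [vAux, if_pos hy]; ring
    have h := (hasDerivAt_poly4 0 (-192) (-384) (-240) (-48) x).congr_of_eventuallyEq heq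
    have hv : pStar x = 4*0*x^3 + 3*(-192)*x^2 + 2*(-384)*x + (-240) := by
      simp only [pStar, if_pos hx]; ring
    rw [hv]; exact h
  · subst hx
    have heqL : ∀ y ∈ Iic (-(1/2):ℝ),
        vAux y = 0*y^4 + (-192)*y^3 + (-384)*y^2 + (-240)*y + (-48) := by
      intro y hy
      simp only [Set.mem_Iic, Set.mem_Ici] at hy
      rcases lt_or_eq_of_le (hy : y ≤ -(1/2)) with h | h
      · simp only [vAux, if_pos h]; ring
      · subst h; norm_num [vAux]
    have hQ1 : HasDerivWithinAt (fun y:ℝ => 0*y^4 + (-192)*y^3 + (-384)*y^2 + (-240)*y + (-48))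
        0 (Iic (-(1/2))) (-(1/2)) := by
      have h := (hasDerivAt_poly4 0 (-192) (-384) (-240) (-48) (-(1/2))).hasDerivWithinAt
        (s := Iic (-(1/2)))
      exact h.congr_deriv (by norm_num)
    have hL : HasDerivWithinAt vAux 0 (Iic (-(1/2))) (-(1/2)) :=
      hQ1.congr heqL (heqL _ Set.self_mem_Iic)
    have hC : HasDerivWithinAt vAux 0 (Icc (-(1/2)) (1/2)) (-(1/2)) := by
      refine ((hasDerivAt_const (-(1/2):ℝ) (0:ℝ)).hasDerivWithinAt).congr (fun y hy => ?_) ?_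
      · simp only [vAux, if_neg (not_lt.mpr hy.1), if_pos hy.2]
      · norm_num [vAux]
    have hd := (hL.union hC).hasDerivAt mem_nhds_union_left
    rw [show pStar (-(1/2)) = 0 by norm_num [pStar]]
    exact hd
  · rcases lt_trichotomy x (1/2) with hx2 | hx2 | hx2
    · have heq : vAux =ᶠ[nhds x] fun _ => (0:ℝ) := by
        filter_upwards [Ioo_mem_nhds hx hx2] with y hy
        simp only [Set.mem_Iio, Set.mem_Iic, Set.mem_Ici, Set.mem_Ioi, Set.mem_Ioo, Set.mem_Icc] at hy
        simp only [vAux, if_neg (not_lt.mpr hy.1.le), if_pos hy.2.le]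
      have h := (hasDerivAt_const x (0:ℝ)).congr_of_eventuallyEq heq
      rw [show pStar x = 0 by simp only [pStar, if_neg (not_lt.mpr hx.le), if_pos hx2.le]]
      exact h
    · subst hx2
      have hC : HasDerivWithinAt vAux 0 (Icc (-(1/2)) (1/2)) (1/2) := by
        refine ((hasDerivAt_const (1/2:ℝ) (0:ℝ)).hasDerivWithinAt).congr (fun y hy => ?_) ?_
        · simp only [vAux, if_neg (not_lt.mpr hy.1), if_pos hy.2]
        · norm_num [vAux]
      have heqR : ∀ y ∈ Ici (1/2:ℝ),
          vAux y = 0*y^4 + (-192)*y^3 + 384*y^2 + (-240)*y + 48 := by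
        intro y hy
        rcases lt_or_eq_of_le (show (1/2:ℝ) ≤ y from hy) with h | h
        · simp only [vAux, if_neg (not_lt.mpr (le_of_lt (by linarith : (-(1/2):ℝ) < y))),
            if_neg (not_le.mpr h)]
          ring
        · subst h; norm_num [vAux]
      have hQ3 : HasDerivWithinAt (fun y:ℝ => 0*y^4 + (-192)*y^3 + 384*y^2 + (-240)*y + 48)
          0 (Ici (1/2)) (1/2) := by
        have h := (hasDerivAt_poly4 0 (-192) 384 (-240) 48 (1/2)).hasDerivWithinAt
          (s := Ici (1/2))
        exact h.congr_deriv (by norm_num)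
      have hR : HasDerivWithinAt vAux 0 (Ici (1/2)) (1/2) :=
        hQ3.congr heqR (heqR _ Set.self_mem_Ici)
      have hd := (hC.union hR).hasDerivAt mem_nhds_union_right
      rw [show pStar (1/2) = 0 by norm_num [pStar]]
      exact hd
    · have heq : vAux =ᶠ[nhds x] fun y => 0*y^4 + (-192)*y^3 + 384*y^2 + (-240)*y + 48 := by
        filter_upwards [Ioi_mem_nhds hx2] with y hy
        simp only [Set.mem_Iio, Set.mem_Iic, Set.mem_Ici, Set.mem_Ioi, Set.mem_Ioo, Set.mem_Icc] at hy
        simp only [vAux, if_neg (not_lt.mpr (le_of_lt (by linarith : (-(1/2):ℝ) < y))),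
          if_neg (not_le.mpr hy)]
        ring
      have h := (hasDerivAt_poly4 0 (-192) 384 (-240) 48 x).congr_of_eventuallyEq heq
      have hv : pStar x = 4*0*x^3 + 3*(-192)*x^2 + 2*384*x + (-240) := by
        simp only [pStar, if_neg (not_lt.mpr (by linarith : (-(1/2):ℝ) ≤ x)),
          if_neg (not_le.mpr hx2)]
        ring
      rw [hv]; exact h

lemma pStar_hasDerivAt_left {y : ℝ} (hy : y < -(1/2)) :
    HasDerivAt pStar (-1152*y - 768) y := by
  have heq : pStar =ᶠ[nhds y] fun z => 0*z^4 + 0*z^3 + (-576)*z^2 + (-768)*z + (-240) := by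
    filter_upwards [Iio_mem_nhds hy] with z hz
    simp only [Set.mem_Iio, Set.mem_Iic, Set.mem_Ici, Set.mem_Ioi, Set.mem_Ioo, Set.mem_Icc] at hz
    simp only [pStar, if_pos hz]; ring
  have h := (hasDerivAt_poly4 0 0 (-576) (-768) (-240) y).congr_of_eventuallyEq heq
  exact h.congr_deriv (by ring)

lemma pStar_hasDerivAt_mid {y : ℝ} (hy1 : -(1/2) < y) (hy2 : y < 1/2) :
    HasDerivAt pStar 0 y := by
  have heq : pStar =ᶠ[nhds y] fun _ => (0:ℝ) := by
    filter_upwards [Ioo_mem_nhds hy1 hy2] with z hz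
    simp only [Set.mem_Iio, Set.mem_Iic, Set.mem_Ici, Set.mem_Ioi, Set.mem_Ioo, Set.mem_Icc] at hz
    simp only [pStar, if_neg (not_lt.mpr hz.1.le), if_pos hz.2.le]
  exact (hasDerivAt_const y (0:ℝ)).congr_of_eventuallyEq heq

lemma pStar_hasDerivAt_right {y : ℝ} (hy : 1/2 < y) :
    HasDerivAt pStar (-1152*y + 768) y := by
  have heq : pStar =ᶠ[nhds y] fun z => 0*z^4 + 0*z^3 + (-576)*z^2 + 768*z + (-240) := by
    filter_upwards [Ioi_mem_nhds hy] with z hz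
    simp only [Set.mem_Iio, Set.mem_Iic, Set.mem_Ici, Set.mem_Ioi, Set.mem_Ioo, Set.mem_Icc] at hz
    simp only [pStar, if_neg (not_lt.mpr (le_of_lt (by linarith : (-(1/2):ℝ) < z))),
      if_neg (not_le.mpr hz)]
    ring
  have h := (hasDerivAt_poly4 0 0 (-576) 768 (-240) y).congr_of_eventuallyEq heq
  exact h.congr_deriv (by ring)

lemma tendsto_deriv_pStar_left_neg :
    Filter.Tendsto (deriv pStar) (nhdsWithin (-(1/2)) (Iio (-(1/2)))) (nhds (-192)) := by
  have hev : deriv pStar =ᶠ[nhdsWithin (-(1/2)) (Iio (-(1/2)))] fun y => -1152*y - 768 := by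
    filter_upwards [self_mem_nhdsWithin] with y hy
    simp only [Set.mem_Iio, Set.mem_Iic, Set.mem_Ici, Set.mem_Ioi, Set.mem_Ioo, Set.mem_Icc] at hy
    exact (pStar_hasDerivAt_left hy).deriv
  refine Filter.Tendsto.congr' hev.symm ?_
  have h : Filter.Tendsto (fun y:ℝ => -1152*y - 768) (nhds (-(1/2))) (nhds (-192)) := by
    have h2 := Continuous.tendsto (show Continuous (fun y:ℝ => -1152*y - 768) by continuity) (-(1/2))
    convert h2 using 2
    norm_num
  exact h.mono_left nhdsWithin_le_nhds

lemma tendsto_deriv_pStar_right_neg :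
    Filter.Tendsto (deriv pStar) (nhdsWithin (-(1/2)) (Ioi (-(1/2)))) (nhds 0) := by
  have hev : deriv pStar =ᶠ[nhdsWithin (-(1/2)) (Ioi (-(1/2)))] fun _ => (0:ℝ) := by
    filter_upwards [Ioo_mem_nhdsGT_of_mem (show (-(1/2):ℝ) ∈ Ico (-(1/2):ℝ) (1/2) from ⟨le_refl _, by norm_num⟩)] with y hy
    simp only [Set.mem_Iio, Set.mem_Iic, Set.mem_Ici, Set.mem_Ioi, Set.mem_Ioo, Set.mem_Icc] at hy
    exact (pStar_hasDerivAt_mid hy.1 hy.2).deriv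
  exact Filter.Tendsto.congr' hev.symm tendsto_const_nhds

lemma tendsto_deriv_pStar_left_pos :
    Filter.Tendsto (deriv pStar) (nhdsWithin (1/2) (Iio (1/2))) (nhds 0) := by
  have hev : deriv pStar =ᶠ[nhdsWithin (1/2) (Iio (1/2))] fun _ => (0:ℝ) := by
    filter_upwards [Ioo_mem_nhdsLT_of_mem (show (1/2:ℝ) ∈ Ioc (-(1/2):ℝ) (1/2) from ⟨by norm_num, le_refl _⟩)] with y hy
    simp only [Set.mem_Iio, Set.mem_Iic, Set.mem_Ici, Set.mem_Ioi, Set.mem_Ioo, Set.mem_Icc] at hy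
    exact (pStar_hasDerivAt_mid hy.1 hy.2).deriv
  exact Filter.Tendsto.congr' hev.symm tendsto_const_nhds

lemma tendsto_deriv_pStar_right_pos :
    Filter.Tendsto (deriv pStar) (nhdsWithin (1/2) (Ioi (1/2))) (nhds 192) := by
  have hev : deriv pStar =ᶠ[nhdsWithin (1/2) (Ioi (1/2))] fun y => -1152*y + 768 := by
    filter_upwards [self_mem_nhdsWithin] with y hy
    simp only [Set.mem_Iio, Set.mem_Iic, Set.mem_Ici, Set.mem_Ioi, Set.mem_Ioo, Set.mem_Icc] at hy
    exact (pStar_hasDerivAt_right hy).deriv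
  refine Filter.Tendsto.congr' hev.symm ?_
  have h : Filter.Tendsto (fun y:ℝ => -1152*y + 768) (nhds (1/2:ℝ)) (nhds 192) := by
    have h2 := Continuous.tendsto (show Continuous (fun y:ℝ => -1152*y + 768) by continuity) (1/2:ℝ)
    convert h2 using 2
    norm_num
  exact h.mono_left nhdsWithin_le_nhds

lemma pStar_not_differentiableAt_neg : ¬ DifferentiableAt ℝ pStar (-(1/2)) := by
  intro h
  have hd := h.hasDerivAt
  rw [hasDerivAt_iff_tendsto_slope] at hd
  have hL : Filter.Tendsto (slope pStar (-(1/2))) (nhdsWithin (-(1/2)) (Iio (-(1/2))))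
      (nhds (-192)) := by
    have hev : slope pStar (-(1/2)) =ᶠ[nhdsWithin (-(1/2)) (Iio (-(1/2)))]
        fun y => -96*(6*y+5) := by
      filter_upwards [self_mem_nhdsWithin] with y hy
      simp only [Set.mem_Iio, Set.mem_Iic, Set.mem_Ici, Set.mem_Ioi, Set.mem_Ioo, Set.mem_Icc] at hy
      have hy' : y - (-(1/2)) ≠ 0 := by
        intro h0; rw [sub_eq_zero] at h0; exact absurd h0.symm.le (not_le.mpr hy)
      rw [slope_def_field]
      simp only [pStar, if_pos hy, if_neg (lt_irrefl (-(1/2):ℝ)),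
        if_pos (show (-(1/2):ℝ) ≤ 1/2 by norm_num)]
      rw [div_eq_iff hy']
      ring
    refine Filter.Tendsto.congr' hev.symm ?_
    have h2 : Filter.Tendsto (fun y:ℝ => -96*(6*y+5)) (nhds (-(1/2))) (nhds (-192)) := by
      have h3 := Continuous.tendsto (show Continuous (fun y:ℝ => -96*(6*y+5)) by continuity) (-(1/2))
      convert h3 using 2
      norm_num
    exact h2.mono_left nhdsWithin_le_nhds
  have hR : Filter.Tendsto (slope pStar (-(1/2))) (nhdsWithin (-(1/2)) (Ioi (-(1/2))))
      (nhds 0) := by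
    have hev : slope pStar (-(1/2)) =ᶠ[nhdsWithin (-(1/2)) (Ioi (-(1/2)))]
        fun _ => (0:ℝ) := by
      filter_upwards [Ioo_mem_nhdsGT_of_mem (show (-(1/2):ℝ) ∈ Ico (-(1/2):ℝ) (1/2) from ⟨le_refl _, by norm_num⟩)] with y hy
      simp only [Set.mem_Iio, Set.mem_Iic, Set.mem_Ici, Set.mem_Ioi, Set.mem_Ioo, Set.mem_Icc] at hy
      rw [slope_def_field]
      simp only [pStar, if_neg (not_lt.mpr hy.1.le), if_pos hy.2.le,
        if_neg (lt_irrefl (-(1/2):ℝ)), if_pos (show (-(1/2):ℝ) ≤ 1/2 by norm_num)]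
      simp
    exact Filter.Tendsto.congr' hev.symm tendsto_const_nhds
  have hsubL : Iio (-(1/2):ℝ) ⊆ ({-(1/2)} : Set ℝ)ᶜ := fun y hy => ne_of_lt hy
  have hsubR : Ioi (-(1/2):ℝ) ⊆ ({-(1/2)} : Set ℝ)ᶜ := fun y hy => ne_of_gt hy
  have h1 : deriv pStar (-(1/2)) = -192 :=
    tendsto_nhds_unique (hd.mono_left (nhdsWithin_mono _ hsubL)) hL
  have h2 : deriv pStar (-(1/2)) = 0 :=
    tendsto_nhds_unique (hd.mono_left (nhdsWithin_mono _ hsubR)) hR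
  rw [h1] at h2
  norm_num at h2

lemma pStar_not_differentiableAt_pos : ¬ DifferentiableAt ℝ pStar (1/2) := by
  intro h
  have hd := h.hasDerivAt
  rw [hasDerivAt_iff_tendsto_slope] at hd
  have hL : Filter.Tendsto (slope pStar (1/2)) (nhdsWithin (1/2) (Iio (1/2)))
      (nhds 0) := by
    have hev : slope pStar (1/2) =ᶠ[nhdsWithin (1/2) (Iio (1/2))] fun _ => (0:ℝ) := by
      filter_upwards [Ioo_mem_nhdsLT_of_mem (show (1/2:ℝ) ∈ Ioc (-(1/2):ℝ) (1/2) from ⟨by norm_num, le_refl _⟩)] with y hy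
      simp only [Set.mem_Iio, Set.mem_Iic, Set.mem_Ici, Set.mem_Ioi, Set.mem_Ioo, Set.mem_Icc] at hy
      rw [slope_def_field]
      simp only [pStar, if_neg (not_lt.mpr hy.1.le), if_pos hy.2.le,
        if_neg (show ¬((1/2:ℝ) < -(1/2)) by norm_num), if_pos (le_refl (1/2:ℝ))]
      simp
    exact Filter.Tendsto.congr' hev.symm tendsto_const_nhds
  have hR : Filter.Tendsto (slope pStar (1/2)) (nhdsWithin (1/2) (Ioi (1/2)))
      (nhds 192) := by
    have hev : slope pStar (1/2) =ᶠ[nhdsWithin (1/2) (Ioi (1/2))]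
        fun y => -96*(6*y-5) := by
      filter_upwards [self_mem_nhdsWithin] with y hy
      simp only [Set.mem_Iio, Set.mem_Iic, Set.mem_Ici, Set.mem_Ioi, Set.mem_Ioo, Set.mem_Icc] at hy
      have hy' : y - (1/2:ℝ) ≠ 0 := sub_ne_zero.mpr (ne_of_gt hy)
      rw [slope_def_field]
      simp only [pStar, if_neg (not_lt.mpr (le_of_lt (by linarith : (-(1/2):ℝ) < y))),
        if_neg (not_le.mpr hy), if_neg (show ¬((1/2:ℝ) < -(1/2)) by norm_num),
        if_pos (le_refl (1/2:ℝ))]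
      rw [div_eq_iff hy']
      ring
    refine Filter.Tendsto.congr' hev.symm ?_
    have h2 : Filter.Tendsto (fun y:ℝ => -96*(6*y-5)) (nhds (1/2:ℝ)) (nhds 192) := by
      have h3 := Continuous.tendsto (show Continuous (fun y:ℝ => -96*(6*y-5)) by continuity) (1/2:ℝ)
      convert h3 using 2
      norm_num
    exact h2.mono_left nhdsWithin_le_nhds
  have hsubL : Iio (1/2:ℝ) ⊆ ({1/2} : Set ℝ)ᶜ := fun y hy => ne_of_lt hy
  have hsubR : Ioi (1/2:ℝ) ⊆ ({1/2} : Set ℝ)ᶜ := fun y hy => ne_of_gt hy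
  have h1 : deriv pStar (1/2) = 0 :=
    tendsto_nhds_unique (hd.mono_left (nhdsWithin_mono _ hsubL)) hL
  have h2 : deriv pStar (1/2) = 192 :=
    tendsto_nhds_unique (hd.mono_left (nhdsWithin_mono _ hsubR)) hR
  rw [h1] at h2
  norm_num at h2

lemma pStar_continuous : Continuous pStar := by
  unfold pStar
  apply Continuous.if
  · intro a ha
    have h : a = -(1/2) := by
      have : frontier {x : ℝ | x < -(1/2)} = {-(1/2)} := frontier_Iio
      rw [this] at ha
      simpa using ha
    subst h
    norm_num
  · continuity
  · apply Continuous.if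
    · intro a ha
      have h : a = 1/2 := by
        have : frontier {x : ℝ | x ≤ 1/2} = {(1/2:ℝ)} := frontier_Iic
        rw [this] at ha
        simpa using ha
      subst h
      norm_num
    · continuity
    · continuity

/-- `p* = u''` on (-1,1); `p*` is continuous on (-1,1); but its derivative has
jump discontinuities at `x = ±1/2` (one-sided limits `-192`/`0` at `-1/2` and `0`/`192` at
`1/2`), so `p*` is not differentiable at `±1/2` and `(p*)'' ∉ L²(-1,1)`, i.e. `p*` admits no
square-integrable second derivative: there is no `q ∈ L²(-1,1)` which is a pointwise
derivative of `deriv p*` throughout `(-1,1)`. -/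
theorem pStar_properties :
    (∀ x ∈ Ioo (-1 : ℝ) 1, deriv (deriv uExact) x = pStar x) ∧
    ContinuousOn pStar (Ioo (-1) 1) ∧
    Filter.Tendsto (deriv pStar) (nhdsWithin (-(1/2)) (Iio (-(1/2)))) (nhds (-192)) ∧
    Filter.Tendsto (deriv pStar) (nhdsWithin (-(1/2)) (Ioi (-(1/2)))) (nhds 0) ∧
    Filter.Tendsto (deriv pStar) (nhdsWithin (1/2) (Iio (1/2))) (nhds 0) ∧
    Filter.Tendsto (deriv pStar) (nhdsWithin (1/2) (Ioi (1/2))) (nhds 192) ∧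
    ¬ DifferentiableAt ℝ pStar (-(1/2)) ∧
    ¬ DifferentiableAt ℝ pStar (1/2) ∧
    ¬ ∃ q : ℝ → ℝ, MeasureTheory.MemLp q 2 (MeasureTheory.volume.restrict (Ioo (-1 : ℝ) 1)) ∧
        ∀ x ∈ Ioo (-1 : ℝ) 1, HasDerivAt (deriv pStar) (q x) x := by
  have hderiv_u : deriv uExact = vAux := funext fun x => (uExact_hasDerivAt x).deriv
  refine ⟨?_, pStar_continuous.continuousOn, tendsto_deriv_pStar_left_neg,
    tendsto_deriv_pStar_right_neg, tendsto_deriv_pStar_left_pos, tendsto_deriv_pStar_right_pos,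
    pStar_not_differentiableAt_neg, pStar_not_differentiableAt_pos, ?_⟩
  · intro x _
    rw [hderiv_u]
    exact (vAux_hasDerivAt x).deriv
  · rintro ⟨q, -, hd⟩
    have hcont := (hd (-(1/2)) (by norm_num)).continuousAt
    have h0 : deriv pStar (-(1/2)) = 0 :=
      deriv_zero_of_not_differentiableAt pStar_not_differentiableAt_neg
    have ht : Filter.Tendsto (deriv pStar) (nhdsWithin (-(1/2)) (Iio (-(1/2)))) (nhds 0) := by
      rw [← h0]
      exact hcont.continuousWithinAt.tendsto
    have := tendsto_nhds_unique tendsto_deriv_pStar_left_neg ht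
    norm_num at this
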